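/- Let n ≥ 2 be a natural number and let B be a C*-algebra. There is no completely positive ℂ-linear map φ : Mₙ(ℂ) → B whose kernel equals the complex linear span of the matrix unit E₁₁; in other words, the span of E₁₁ in Mₙ(ℂ), although a closed non-unital self-adjoint subspace, is not the kernel of any completely positive map on Mₙ(ℂ). -/

import Mathlib

/-- An element `M` of `Mₙ(A)` (for `A` a C*-algebra) is positive iff it factors as
`M = Nᴴ * N` for some `N ∈ Mₙ(A)`. -/
def IsPosMat {A : Type*} [Ring A] [StarRing A] {n : ℕ}
    (M : Matrix (Fin n) (Fin n) A) : Prop :=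
  ∃ N : Matrix (Fin n) (Fin n) A, M = N.conjTranspose * N

/-- A linear map between C*-algebras is completely positive if all entrywise induced
maps on matrix algebras preserve positivity. -/
def CompletelyPositive {A B : Type*} [Ring A] [StarRing A] [Module ℂ A]
    [Ring B] [StarRing B] [Module ℂ B] (φ : A →ₗ[ℂ] B) : Prop :=
  ∀ (n : ℕ) (M : Matrix (Fin n) (Fin n) A), IsPosMat M → IsPosMat (M.map φ)

/-- For `n ≥ 2`, the span of the matrix unit `E₁₁` in `Mₙ(ℂ)` is not the kernel of
any completely positive map on `Mₙ(ℂ)`. -/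
theorem stmt3 {B : Type*} [CStarAlgebra B] (n : ℕ) (hn : 2 ≤ n)
    (φ : Matrix (Fin n) (Fin n) ℂ →ₗ[ℂ] B) (hφ : CompletelyPositive φ) :
    LinearMap.ker φ ≠
      Submodule.span ℂ {Matrix.single ⟨0, by omega⟩ ⟨0, by omega⟩ (1 : ℂ)} := by
  intro hker
  letI := CStarAlgebra.spectralOrder B
  haveI := CStarAlgebra.spectralOrderedRing B
  set e0 : Fin n := ⟨0, by omega⟩ with he0
  set e1 : Fin n := ⟨1, by omega⟩ with he1
  have hne : e0 ≠ e1 := by simp [he0, he1, Fin.ext_iff]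
  set E : Fin n → Fin n → Matrix (Fin n) (Fin n) ℂ :=
    fun i j => Matrix.single i j 1 with hE
  -- φ (E e0 e0) = 0
  have h00 : φ (E e0 e0) = 0 := by
    have : E e0 e0 ∈ LinearMap.ker φ := by
      rw [hker]; exact Submodule.mem_span_singleton_self _
    exact LinearMap.mem_ker.mp this
  -- the 2×2 matrix of matrix units is positive
  set M : Matrix (Fin 2) (Fin 2) (Matrix (Fin n) (Fin n) ℂ) :=
    !![E e0 e0, E e0 e1; E e1 e0, E e1 e1] with hM
  have hstar : ∀ i j : Fin n, star (Matrix.single i j (1:ℂ)) =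
      Matrix.single j i 1 := by
    intro i j
    ext k l
    simp [Matrix.star_apply, Matrix.single, and_comm]
  have hMpos : IsPosMat M := by
    refine ⟨!![E e0 e0, E e0 e1; 0, 0], ?_⟩
    ext i j
    fin_cases i <;> fin_cases j <;>
      simp [hM, hE, Matrix.mul_apply, Fin.sum_univ_two, Matrix.conjTranspose_apply,
        hstar, Matrix.single_mul_single_same]
  obtain ⟨Q, hQ⟩ := hφ 2 M hMpos
  -- entries
  have h00' : star (Q 0 0) * Q 0 0 + star (Q 1 0) * Q 1 0 = 0 := by
    have := congrFun (congrFun hQ 0) 0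
    simpa [hM, Matrix.mul_apply, Fin.sum_univ_two, Matrix.conjTranspose_apply, h00] using this.symm
  have hq00 : Q 0 0 = 0 := by
    have ha := star_mul_self_nonneg (Q 0 0)
    have hb := star_mul_self_nonneg (Q 1 0)
    have h1 : star (Q 0 0) * Q 0 0 = 0 :=
      le_antisymm (by calc star (Q 0 0) * Q 0 0 ≤ _ := le_add_of_nonneg_right hb
        _ = 0 := h00') ha
    exact (CStarRing.star_mul_self_eq_zero_iff _).mp h1
  have hq10 : Q 1 0 = 0 := by
    have ha := star_mul_self_nonneg (Q 0 0)
    have hb := star_mul_self_nonneg (Q 1 0)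
    have h1 : star (Q 1 0) * Q 1 0 = 0 :=
      le_antisymm (by calc star (Q 1 0) * Q 1 0 ≤ _ := le_add_of_nonneg_left ha
        _ = 0 := h00') hb
    exact (CStarRing.star_mul_self_eq_zero_iff _).mp h1
  -- hence φ (E e0 e1) = 0
  have h01 : φ (E e0 e1) = 0 := by
    have := congrFun (congrFun hQ 0) 1
    simpa [hM, Matrix.mul_apply, Fin.sum_univ_two, Matrix.conjTranspose_apply, hq00, hq10]
      using this
  -- so E e0 e1 ∈ ker φ = span {E e0 e0}
  have hmem : E e0 e1 ∈ Submodule.span ℂ {E e0 e0} := by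
    rw [← hker]; exact LinearMap.mem_ker.mpr h01
  obtain ⟨c, hc⟩ := Submodule.mem_span_singleton.mp hmem
  have := congrFun (congrFun hc e0) e1
  simp [hE, Matrix.single, hne] at this
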